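/- Let γ ≥ 0, s > 0 and δ ∈ {−1, +1}, and set a := γ²·s and b := δ·(3γ²s² + s³). Then b ≠ 0 and the sign of b equals δ; moreover s is the unique real root of the polynomial x³ + 3a·x − |b|, and γ² = a/s. -/
import Mathlib


/-- Let `γ ≥ 0`, `s > 0`, `δ ∈ {−1,+1}`, and set `a := γ²s`, `b := δ(3γ²s² + s³)`.
Then `b ≠ 0` with `sign b = δ`; moreover `s` is the unique real root of `x³ + 3ax − |b|`
and `γ² = a/s`. -/
theorem stmt_19 (γ s δ a b : ℝ) (hγ : 0 ≤ γ) (hs : 0 < s) (hδ : δ = 1 ∨ δ = -1)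
    (ha : a = γ ^ 2 * s) (hb : b = δ * (3 * γ ^ 2 * s ^ 2 + s ^ 3)) :
    b ≠ 0 ∧ Real.sign b = δ ∧
    (s ^ 3 + 3 * a * s - |b| = 0 ∧ ∀ x : ℝ, x ^ 3 + 3 * a * x - |b| = 0 → x = s) ∧
    γ ^ 2 = a / s := by
  have hsq : 0 ≤ γ ^ 2 := sq_nonneg γ
  have hpos : 0 < 3 * γ ^ 2 * s ^ 2 + s ^ 3 := by positivity
  have habs : |b| = 3 * γ ^ 2 * s ^ 2 + s ^ 3 := by
    rcases hδ with h | h <;> subst h <;> rw [hb]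
    · rw [one_mul, abs_of_pos hpos]
    · rw [neg_one_mul, abs_neg, abs_of_pos hpos]
  have ha0 : 0 ≤ a := by rw [ha]; positivity
  refine ⟨?_, ?_, ⟨?_, ?_⟩, ?_⟩
  · rcases hδ with h | h <;> subst h <;> rw [hb]
    · rw [one_mul]; exact hpos.ne'
    · rw [neg_one_mul]; exact neg_ne_zero.mpr hpos.ne'
  · rcases hδ with h | h <;> subst h <;> rw [hb]
    · rw [one_mul, Real.sign_of_pos hpos]
    · rw [neg_one_mul, Real.sign_of_neg (neg_neg_of_pos hpos)]
  · rw [habs, ha]; ring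
  · intro x hx
    rw [habs, ha] at hx
    have hfac : (x - s) * (x ^ 2 + x * s + s ^ 2 + 3 * (γ ^ 2 * s)) = 0 := by
      nlinarith [hx]
    rcases mul_eq_zero.mp hfac with h | h
    · linarith
    · nlinarith [sq_nonneg (x + s), sq_nonneg x, sq_nonneg s, mul_pos hs hs]
  · rw [ha]; field_simp
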